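/- Let q be a positive integer and let χ be a primitive Dirichlet character modulo q that is not real-valued (so χ ≠ χ̄, where χ̄ is the complex-conjugate character). Let κ ∈ {0,1} be determined by χ(−1) = (−1)^κ, and let θ ∈ ℝ satisfy e^{2iθ} = ε(χ) and cos θ ≠ 0. Then the function f(s) = (1/2) sec θ · [e^{−iθ} L(s, χ) + e^{iθ} L(s, χ̄)] satisfies the Riemann-type functional equation f(s) = W(s) · f(1−s) for every s ∈ ℂ that is not an integer, where W(s) = 2^s q^{1/2−s} π^{s−1} Γ(1−s) sin(π(s+κ)/2). -/

import Mathlib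

open Complex DirichletCharacter

/-- The complex-conjugate character of a Dirichlet character `χ` (with values in `ℂ`). -/
noncomputable def conjChar {q : ℕ} (χ : DirichletCharacter ℂ q) : DirichletCharacter ℂ q :=
  χ.ringHomComp (starRingEnd ℂ)

/-- The Gauss sum `τ(χ) = ∑_{k=1}^{q} χ(k) exp(2πik/q)`. -/
noncomputable def tau {q : ℕ} (χ : DirichletCharacter ℂ q) : ℂ :=
  ∑ k ∈ Finset.Icc 1 q, χ (k : ZMod q) * Complex.exp (2 * Real.pi * I * k / q)

/-- `ε(χ) = τ(χ) / (i^κ √q)`. -/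
noncomputable def eps {q : ℕ} (κ : ℕ) (χ : DirichletCharacter ℂ q) : ℂ :=
  tau χ / (I ^ κ * Real.sqrt q)

-- helper 1: linearity of ZMod.LFunction
lemma ZLF_const_mul {N : ℕ} [NeZero N] (c : ℂ) (Φ : ZMod N → ℂ) (s : ℂ) :
    ZMod.LFunction (fun j => c * Φ j) s = c * ZMod.LFunction Φ s := by
  simp only [ZMod.LFunction, Finset.mul_sum]
  exact Finset.sum_congr rfl fun j _ => by ring

-- helper 2: inverse of primitive is primitive
lemma factorsThrough_inv {n : ℕ} {χ : DirichletCharacter ℂ n} {d : ℕ}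
    (h : χ.FactorsThrough d) : χ⁻¹.FactorsThrough d := by
  obtain ⟨hd, χ₀, h0⟩ := h
  exact ⟨hd, χ₀⁻¹, by rw [map_inv, ← h0]⟩

lemma conductorSet_inv {n : ℕ} (χ : DirichletCharacter ℂ n) :
    conductorSet χ⁻¹ = conductorSet χ := by
  ext d
  constructor
  · intro h
    have := factorsThrough_inv (χ := χ⁻¹) h
    rw [inv_inv] at this
    exact this
  · exact fun h => factorsThrough_inv h

lemma isPrimitive_inv {n : ℕ} {χ : DirichletCharacter ℂ n} (h : χ.IsPrimitive) :
    χ⁻¹.IsPrimitive := by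
  unfold DirichletCharacter.IsPrimitive DirichletCharacter.conductor at *
  rwa [conductorSet_inv]

-- helper 3 : conjChar = inverse
lemma conjChar_eq_inv {q : ℕ} [NeZero q] (χ : DirichletCharacter ℂ q) :
    conjChar χ = χ⁻¹ := MulChar.star_eq_inv χ

lemma tau_eq_gaussSum {q : ℕ} [NeZero q] (χ : DirichletCharacter ℂ q) :
    tau χ = gaussSum χ ZMod.stdAddChar := by
  have hterm : ∀ k : ℕ, χ (k : ZMod q) * Complex.exp (2 * Real.pi * I * k / q)
      = χ (k : ZMod q) * ZMod.stdAddChar (k : ZMod q) := by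
    intro k
    rw [show ((k : ZMod q)) = (((k : ℤ) : ZMod q)) by push_cast; rfl, ZMod.stdAddChar_coe]
    norm_cast
  unfold tau gaussSum
  rw [Finset.sum_congr rfl fun k _ => hterm k]
  have hq : 0 < q := Nat.pos_of_ne_zero (NeZero.ne q)
  refine Finset.sum_bij' (fun k _ => (k : ZMod q)) (fun a _ => if a.val = 0 then q else a.val)
    (fun k _ => Finset.mem_univ _) ?_ ?_ ?_ (fun k _ => rfl)
  · intro a _
    by_cases h : a.val = 0
    · rw [if_pos h, Finset.mem_Icc]
      omega
    · rw [if_neg h, Finset.mem_Icc]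
      exact ⟨Nat.one_le_iff_ne_zero.mpr h, (ZMod.val_lt a).le⟩
  · intro k hk
    rw [Finset.mem_Icc] at hk
    rcases eq_or_lt_of_le hk.2 with h | h
    · subst h
      simp [ZMod.natCast_self]
    · rw [ZMod.val_cast_of_lt h, if_neg (by omega)]
  · intro a _
    by_cases h : a.val = 0
    · rw [if_pos h, ZMod.natCast_self]
      exact ((ZMod.val_eq_zero a).mp h).symm
    · rw [if_neg h, ZMod.natCast_zmod_val]

lemma gaussSum_mul_gaussSum_inv {q : ℕ} [NeZero q] {χ : DirichletCharacter ℂ q}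
    (hχ : χ.IsPrimitive) :
    gaussSum χ ZMod.stdAddChar * gaussSum χ⁻¹ ZMod.stdAddChar = χ (-1) * q := by
  have hm1 : χ (-1) * χ (-1) = 1 := by
    rw [← map_mul, neg_mul_neg, one_mul, MulChar.map_one]
  have h1 := congrFun (ZMod.dft_dft (N := q) (χ : ZMod q → ℂ)) (-1)
  have hF1 : ZMod.dft (χ : ZMod q → ℂ) = fun k => χ⁻¹ (-k) *
      gaussSum χ ZMod.stdAddChar := funext fun k => hχ.fourierTransform_eq_inv_mul_gaussSum k
  rw [hF1, ZMod.dft_mul_const (fun k => χ⁻¹ (-k)) (gaussSum χ ZMod.stdAddChar)] at h1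
  have h2 := congrFun (ZMod.dft_comp_neg (N := q) (fun j => (χ⁻¹ j : ℂ))) (-1)
  dsimp only at h1 h2
  rw [h2] at h1
  have h3 := (isPrimitive_inv hχ).fourierTransform_eq_inv_mul_gaussSum (-(-1) : ZMod q)
  rw [show ZMod.dft (fun j => (χ⁻¹ j : ℂ)) (- -1) = ZMod.dft (⇑(χ⁻¹ : DirichletCharacter ℂ q))
      (- -1) from rfl, h3] at h1
  simp only [neg_neg, inv_inv, smul_eq_mul, map_one] at h1
  linear_combination (χ (-1)) * h1 -
    (gaussSum χ⁻¹ ZMod.stdAddChar * gaussSum χ ZMod.stdAddChar) * hm1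

lemma inv_apply_neg_one {q : ℕ} [NeZero q] (χ : DirichletCharacter ℂ q) :
    χ⁻¹ (-1) = χ (-1) := by
  have hm1 : χ (-1) * χ (-1) = 1 := by
    rw [← map_mul, neg_mul_neg, one_mul, MulChar.map_one]
  rw [MulChar.inv_apply_eq_inv']
  exact inv_eq_of_mul_eq_one_right hm1

lemma key_FE {q : ℕ} [NeZero q] {χ : DirichletCharacter ℂ q} (hq : q ≠ 1)
    (hχ : χ.IsPrimitive) {s : ℂ} (hs : ∀ n : ℤ, s ≠ (n : ℂ)) :
    LFunction χ s = gaussSum χ ZMod.stdAddChar * (q : ℂ) ^ (-s) *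
      (2 * (Real.pi : ℂ)) ^ (s - 1) * Complex.Gamma (1 - s) *
      (χ (-1) * Complex.exp (Real.pi * I * (1 - s) / 2) +
        Complex.exp (-(Real.pi * I * (1 - s) / 2))) *
      LFunction χ⁻¹ (1 - s) := by
  have h1 : ∀ n : ℕ, (1 - s : ℂ) ≠ -n := by
    intro n h
    apply hs ((n : ℤ) + 1)
    push_cast
    linear_combination -h
  have h2 : (χ : ZMod q → ℂ) 0 = 0 ∨ (1 - s : ℂ) ≠ 1 := Or.inl (χ.map_zero' hq)
  have H := ZMod.LFunction_one_sub (χ : ZMod q → ℂ) h1 h2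
  rw [sub_sub_cancel] at H
  -- identify the Fourier transforms
  have hF1 : ZMod.dft (χ : ZMod q → ℂ) =
      fun k => (χ⁻¹ (-1) * gaussSum χ ZMod.stdAddChar) * χ⁻¹ k := by
    funext k
    rw [hχ.fourierTransform_eq_inv_mul_gaussSum, show (-k : ZMod q) = -1 * k by ring, map_mul]
    ring
  have hF2 : ZMod.dft (fun x => (χ : ZMod q → ℂ) (-x)) =
      fun k => gaussSum χ ZMod.stdAddChar * χ⁻¹ k := by
    have h2 := ZMod.dft_comp_neg (N := q) (χ : ZMod q → ℂ)
    rw [h2]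
    funext k
    rw [hχ.fourierTransform_eq_inv_mul_gaussSum, neg_neg]
    ring
  rw [hF1, hF2, ZLF_const_mul, ZLF_const_mul] at H
  have hL : ZMod.LFunction (⇑(χ⁻¹ : DirichletCharacter ℂ q)) (1 - s)
      = LFunction χ⁻¹ (1 - s) := rfl
  rw [hL] at H
  have hLs : LFunction χ s = ZMod.LFunction (χ : ZMod q → ℂ) s := rfl
  rw [hLs, H, inv_apply_neg_one, show ((1 : ℂ) - s - 1) = -s by ring,
    show (-(1 - s) : ℂ) = s - 1 by ring]
  ring

lemma exp_pi_div_two_mul_I : Complex.exp ((Real.pi : ℂ) / 2 * I) = I := by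
  rw [Complex.exp_mul_I]
  rw [show ((Real.pi : ℂ) / 2) = ((Real.pi / 2 : ℝ) : ℂ) by push_cast; ring]
  rw [← Complex.ofReal_cos, ← Complex.ofReal_sin, Real.cos_pi_div_two, Real.sin_pi_div_two]
  simp

lemma exp_neg_pi_div_two_mul_I : Complex.exp (-((Real.pi : ℂ) / 2 * I)) = -I := by
  rw [Complex.exp_neg, _root_.exp_pi_div_two_mul_I, Complex.inv_I]

lemma trig_id (κ : ℕ) (hκ : κ = 0 ∨ κ = 1) (s : ℂ) :
    ((-1 : ℂ) ^ κ * Complex.exp ((Real.pi : ℂ) * I * (1 - s) / 2) +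
      Complex.exp (-((Real.pi : ℂ) * I * (1 - s) / 2))) * I ^ κ
    = 2 * Complex.sin ((Real.pi : ℂ) * (s + κ) / 2) := by
  rcases hκ with rfl | rfl
  · have e1 : Complex.exp ((Real.pi : ℂ) * I * (1 - s) / 2)
        = I * Complex.exp (-((Real.pi : ℂ) * s / 2) * I) := by
      rw [show ((Real.pi : ℂ) * I * (1 - s) / 2)
          = (Real.pi : ℂ) / 2 * I + -((Real.pi : ℂ) * s / 2) * I by ring,
        Complex.exp_add, _root_.exp_pi_div_two_mul_I]
    have e2 : Complex.exp (-((Real.pi : ℂ) * I * (1 - s) / 2))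
        = -I * Complex.exp ((Real.pi : ℂ) * s / 2 * I) := by
      rw [show (-((Real.pi : ℂ) * I * (1 - s) / 2))
          = -((Real.pi : ℂ) / 2 * I) + (Real.pi : ℂ) * s / 2 * I by ring,
        Complex.exp_add, _root_.exp_neg_pi_div_two_mul_I]
    rw [e1, e2, show ((Real.pi : ℂ) * (s + (0 : ℕ)) / 2) = (Real.pi : ℂ) * s / 2 by
        push_cast; ring, Complex.sin]
    simp only [Complex.I_sq, pow_zero]
    ring_nf
  · have e1 : Complex.exp ((Real.pi : ℂ) * (s + (1 : ℕ)) / 2 * I)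
        = I * Complex.exp ((Real.pi : ℂ) * s / 2 * I) := by
      rw [show ((Real.pi : ℂ) * (s + (1 : ℕ)) / 2 * I)
          = (Real.pi : ℂ) / 2 * I + (Real.pi : ℂ) * s / 2 * I by push_cast; ring,
        Complex.exp_add, _root_.exp_pi_div_two_mul_I]
    have e2 : Complex.exp (-((Real.pi : ℂ) * (s + (1 : ℕ)) / 2) * I)
        = -I * Complex.exp (-((Real.pi : ℂ) * s / 2) * I) := by
      rw [show (-((Real.pi : ℂ) * (s + (1 : ℕ)) / 2) * I)
          = -((Real.pi : ℂ) / 2 * I) + -((Real.pi : ℂ) * s / 2) * I by push_cast; ring,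
        Complex.exp_add, _root_.exp_neg_pi_div_two_mul_I]
    have e3 : Complex.exp ((Real.pi : ℂ) * I * (1 - s) / 2)
        = I * Complex.exp (-((Real.pi : ℂ) * s / 2) * I) := by
      rw [show ((Real.pi : ℂ) * I * (1 - s) / 2)
          = (Real.pi : ℂ) / 2 * I + -((Real.pi : ℂ) * s / 2) * I by ring,
        Complex.exp_add, _root_.exp_pi_div_two_mul_I]
    have e4 : Complex.exp (-((Real.pi : ℂ) * I * (1 - s) / 2))
        = -I * Complex.exp ((Real.pi : ℂ) * s / 2 * I) := by
      rw [show (-((Real.pi : ℂ) * I * (1 - s) / 2))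
          = -((Real.pi : ℂ) / 2 * I) + (Real.pi : ℂ) * s / 2 * I by ring,
        Complex.exp_add, _root_.exp_neg_pi_div_two_mul_I]
    rw [e3, e4, Complex.sin, e1, e2]
    ring_nf

/-- Let `χ` be a primitive, non-real-valued Dirichlet character mod `q > 0`,
with parity `κ ∈ {0,1}` and `θ ∈ ℝ` with `e^{2iθ} = ε(χ)` and `cos θ ≠ 0`.  Then
`f(s) = ½ sec θ (e^{-iθ} L(s,χ) + e^{iθ} L(s,χ̄))` satisfies the Riemann-type functional
equation `f(s) = W(s) f(1-s)` for all non-integer `s`, where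
`W(s) = 2^s q^{1/2-s} π^{s-1} Γ(1-s) sin(π(s+κ)/2)`. -/
theorem davenport_heilbronn_type_functional_equation
    (q : ℕ) [NeZero q] (χ : DirichletCharacter ℂ q)
    (hprim : χ.IsPrimitive) (hnotreal : χ ≠ conjChar χ)
    (κ : ℕ) (hκ : κ = 0 ∨ κ = 1) (hparity : χ (-1) = (-1 : ℂ) ^ κ)
    (θ : ℝ) (hθ : Complex.exp (2 * I * θ) = eps κ χ) (hcos : Real.cos θ ≠ 0)
    (f : ℂ → ℂ)
    (hf : ∀ s : ℂ, f s = (1 / 2) * ((Real.cos θ : ℂ))⁻¹ *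
      (Complex.exp (-(I * θ)) * LFunction χ s +
        Complex.exp (I * θ) * LFunction (conjChar χ) s)) :
    ∀ s : ℂ, (∀ n : ℤ, s ≠ (n : ℂ)) →
      f s = (2 : ℂ) ^ s * (q : ℂ) ^ ((1 : ℂ) / 2 - s) * (Real.pi : ℂ) ^ (s - 1) *
        Complex.Gamma (1 - s) * Complex.sin (Real.pi * (s + κ) / 2) * f (1 - s) := by
  intro s hs
  -- basic non-vanishing facts
  have hqpos : 0 < q := Nat.pos_of_ne_zero (NeZero.ne q)
  have hq0 : (q : ℂ) ≠ 0 := Nat.cast_ne_zero.mpr (NeZero.ne q)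
  have hsqpos : 0 < Real.sqrt q := Real.sqrt_pos.mpr (by exact_mod_cast hqpos)
  have hsqne : ((Real.sqrt q : ℝ) : ℂ) ≠ 0 := by
    exact_mod_cast hsqpos.ne'
  have hIκ : (I : ℂ) ^ κ ≠ 0 := pow_ne_zero _ I_ne_zero
  have hden : (I ^ κ * (Real.sqrt q : ℂ)) ≠ 0 := mul_ne_zero hIκ hsqne
  have hq1 : q ≠ 1 := by
    rintro rfl
    exact hnotreal ((level_one χ).trans (level_one _).symm)
  have hinv : conjChar χ = χ⁻¹ := conjChar_eq_inv χ
  -- the two asymmetric functional equations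
  have hK1 := key_FE hq1 hprim hs
  have hK2 := key_FE hq1 (isPrimitive_inv hprim) hs
  rw [inv_inv, inv_apply_neg_one] at hK2
  rw [hparity] at hK1 hK2
  -- Gauss sum facts
  have hG : gaussSum χ ZMod.stdAddChar * gaussSum χ⁻¹ ZMod.stdAddChar = (-1 : ℂ) ^ κ * q := by
    rw [gaussSum_mul_gaussSum_inv hprim, hparity]
  have hθ' : Complex.exp (2 * I * θ) =
      gaussSum χ ZMod.stdAddChar / (I ^ κ * (Real.sqrt q : ℂ)) := by
    rw [hθ]; unfold eps; rw [tau_eq_gaussSum]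
  have hτeq : gaussSum χ ZMod.stdAddChar =
      Complex.exp (2 * I * θ) * (I ^ κ * (Real.sqrt q : ℂ)) := by
    rw [hθ']
    field_simp
  have hexp2 : Complex.exp (2 * I * θ) * Complex.exp (-(2 * I * θ)) = 1 := by
    rw [← Complex.exp_add]
    simp
  have hIκ2 : (I : ℂ) ^ κ * I ^ κ = (-1 : ℂ) ^ κ := by
    rcases hκ with rfl | rfl
    · simp
    · simp [Complex.I_mul_I]
  have hsq2 : ((Real.sqrt q : ℝ) : ℂ) * ((Real.sqrt q : ℝ) : ℂ) = (q : ℂ) := by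
    rw [← Complex.ofReal_mul, Real.mul_self_sqrt (by positivity)]
    norm_cast
  have hτ'eq : gaussSum χ⁻¹ ZMod.stdAddChar =
      Complex.exp (-(2 * I * θ)) * (I ^ κ * (Real.sqrt q : ℂ)) := by
    refine mul_left_cancel₀ (mul_ne_zero (Complex.exp_ne_zero (2 * I * θ)) hden) ?_
    linear_combination (-(gaussSum χ⁻¹ ZMod.stdAddChar)) * hτeq + hG +
      (-(I ^ κ * I ^ κ * ((Real.sqrt q : ℝ) : ℂ) * ((Real.sqrt q : ℝ) : ℂ))) * hexp2 +
      (-(((Real.sqrt q : ℝ) : ℂ) * ((Real.sqrt q : ℝ) : ℂ))) * hIκ2 +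
      (-((-1 : ℂ) ^ κ)) * hsq2
  -- power identities
  have F1 : ((2 : ℂ) * (Real.pi : ℂ)) ^ (s - 1) = (2 : ℂ) ^ (s - 1) * (Real.pi : ℂ) ^ (s - 1) := by
    rw [show ((2 : ℂ) * (Real.pi : ℂ)) = (((2 : ℝ) : ℂ) * ((Real.pi : ℝ) : ℂ)) by norm_num,
      mul_cpow_ofReal_nonneg (by norm_num) Real.pi_pos.le]
    norm_num
  have F2 : (2 : ℂ) ^ s = 2 * (2 : ℂ) ^ (s - 1) := by
    conv_lhs => rw [show s = 1 + (s - 1) by ring]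
    rw [Complex.cpow_add _ _ two_ne_zero, Complex.cpow_one]
  have F3 : (q : ℂ) ^ ((1 : ℂ) / 2 - s) = ((Real.sqrt q : ℝ) : ℂ) * (q : ℂ) ^ (-s) := by
    rw [show ((1 : ℂ) / 2 - s) = (1 / 2 : ℂ) + (-s) by ring, Complex.cpow_add _ _ hq0]
    congr 1
    rw [show ((1 : ℂ) / 2) = (((1 / 2 : ℝ) : ℝ) : ℂ) by norm_num,
      show ((q : ℂ)) = (((q : ℝ) : ℝ) : ℂ) by norm_cast,
      ← Complex.ofReal_cpow (by positivity), Real.sqrt_eq_rpow]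
  -- the trig identity
  have hT := trig_id κ hκ s
  -- the key scalar identity
  have C : (q : ℂ) ^ (-s) * (2 * (Real.pi : ℂ)) ^ (s - 1) * Complex.Gamma (1 - s) *
      ((-1 : ℂ) ^ κ * Complex.exp (Real.pi * I * (1 - s) / 2) +
        Complex.exp (-(Real.pi * I * (1 - s) / 2))) * (I ^ κ * ((Real.sqrt q : ℝ) : ℂ))
      = (2 : ℂ) ^ s * (q : ℂ) ^ ((1 : ℂ) / 2 - s) * (Real.pi : ℂ) ^ (s - 1) *
        Complex.Gamma (1 - s) * Complex.sin (Real.pi * (s + κ) / 2) := by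
    rw [F1, F2, F3]
    linear_combination ((q : ℂ) ^ (-s) * (2 : ℂ) ^ (s - 1) * (Real.pi : ℂ) ^ (s - 1) *
      Complex.Gamma (1 - s) * ((Real.sqrt q : ℝ) : ℂ)) * hT
  -- the exponential shuffles
  have hE1 : Complex.exp (-(I * θ)) * Complex.exp (2 * I * θ) = Complex.exp (I * θ) := by
    rw [← Complex.exp_add]
    congr 1
    ring
  have hE2 : Complex.exp (I * θ) * Complex.exp (-(2 * I * θ)) = Complex.exp (-(I * θ)) := by
    rw [← Complex.exp_add]
    congr 1
    ring
  -- the two claims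
  have Claim1 : Complex.exp (-(I * θ)) * (gaussSum χ ZMod.stdAddChar * (q : ℂ) ^ (-s) *
      (2 * (Real.pi : ℂ)) ^ (s - 1) * Complex.Gamma (1 - s) *
      ((-1 : ℂ) ^ κ * Complex.exp (Real.pi * I * (1 - s) / 2) +
        Complex.exp (-(Real.pi * I * (1 - s) / 2))))
      = ((2 : ℂ) ^ s * (q : ℂ) ^ ((1 : ℂ) / 2 - s) * (Real.pi : ℂ) ^ (s - 1) *
        Complex.Gamma (1 - s) * Complex.sin (Real.pi * (s + κ) / 2)) * Complex.exp (I * θ) := by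
    rw [hτeq, ← C]
    linear_combination (I ^ κ * ((Real.sqrt q : ℝ) : ℂ) * ((q : ℂ) ^ (-s) *
      (2 * (Real.pi : ℂ)) ^ (s - 1) * Complex.Gamma (1 - s) *
      ((-1 : ℂ) ^ κ * Complex.exp (Real.pi * I * (1 - s) / 2) +
        Complex.exp (-(Real.pi * I * (1 - s) / 2))))) * hE1
  have Claim2 : Complex.exp (I * θ) * (gaussSum χ⁻¹ ZMod.stdAddChar * (q : ℂ) ^ (-s) *
      (2 * (Real.pi : ℂ)) ^ (s - 1) * Complex.Gamma (1 - s) *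
      ((-1 : ℂ) ^ κ * Complex.exp (Real.pi * I * (1 - s) / 2) +
        Complex.exp (-(Real.pi * I * (1 - s) / 2))))
      = ((2 : ℂ) ^ s * (q : ℂ) ^ ((1 : ℂ) / 2 - s) * (Real.pi : ℂ) ^ (s - 1) *
        Complex.Gamma (1 - s) * Complex.sin (Real.pi * (s + κ) / 2)) *
        Complex.exp (-(I * θ)) := by
    rw [hτ'eq, ← C]
    linear_combination (I ^ κ * ((Real.sqrt q : ℝ) : ℂ) * ((q : ℂ) ^ (-s) *
      (2 * (Real.pi : ℂ)) ^ (s - 1) * Complex.Gamma (1 - s) *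
      ((-1 : ℂ) ^ κ * Complex.exp (Real.pi * I * (1 - s) / 2) +
        Complex.exp (-(Real.pi * I * (1 - s) / 2))))) * hE2
  -- assemble
  rw [hf s, hf (1 - s), hinv]
  linear_combination (1 / 2 * ((Real.cos θ : ℂ))⁻¹ * Complex.exp (-(I * θ))) * hK1 +
    (1 / 2 * ((Real.cos θ : ℂ))⁻¹ * Complex.exp (I * θ)) * hK2 +
    (1 / 2 * ((Real.cos θ : ℂ))⁻¹ * LFunction χ⁻¹ (1 - s)) * Claim1 +
    (1 / 2 * ((Real.cos θ : ℂ))⁻¹ * LFunction χ (1 - s)) * Claim2
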